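/- Let θ be an antisymmetric n×n real matrix written in block form θ = [[θ₁₁,θ₁₂],[θ₂₁,θ₂₂]] where θ₁₁ is the top-left 2p×2p block, and suppose θ₁₁ is invertible. Let σ_{2p} ∈ O(n,n|ℤ) be the transformation swapping aⁱ↔bᵢ for 1 ≤ i ≤ 2p. Then σ_{2p}·θ (the fractional-linear action) is defined and equals [[θ₁₁⁻¹, -θ₁₁⁻¹θ₁₂],[θ₂₁θ₁₁⁻¹, θ₂₂ - θ₂₁θ₁₁⁻¹θ₁₂]]. -/
import Mathlib


open Matrix

/-- Let `θ = [[θ₁₁,θ₁₂],[θ₂₁,θ₂₂]]` be antisymmetric with top-left `2p × 2p` block `θ₁₁`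
invertible. Then the fractional-linear action of `σ_{2p}` (with blocks
`A = D = diag(0,…,0,1,…,1)`, `B = C = diag(1,…,1,0,…,0)`) is defined at `θ` and equals
`[[θ₁₁⁻¹, -θ₁₁⁻¹θ₁₂],[θ₂₁θ₁₁⁻¹, θ₂₂ - θ₂₁θ₁₁⁻¹θ₁₂]]`. -/
theorem stmt11 (p q : ℕ)
    (θ11 : Matrix (Fin (2 * p)) (Fin (2 * p)) ℝ) (θ12 : Matrix (Fin (2 * p)) (Fin q) ℝ)
    (θ21 : Matrix (Fin q) (Fin (2 * p)) ℝ) (θ22 : Matrix (Fin q) (Fin q) ℝ)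
    (hθ : (Matrix.fromBlocks θ11 θ12 θ21 θ22)ᵀ = -(Matrix.fromBlocks θ11 θ12 θ21 θ22))
    (h11 : IsUnit θ11.det) :
    IsUnit (Matrix.fromBlocks (1 : Matrix (Fin (2 * p)) (Fin (2 * p)) ℝ) 0 0 0 *
        Matrix.fromBlocks θ11 θ12 θ21 θ22 +
        Matrix.fromBlocks 0 0 0 (1 : Matrix (Fin q) (Fin q) ℝ)) ∧
    (Matrix.fromBlocks 0 0 0 (1 : Matrix (Fin q) (Fin q) ℝ) *
        Matrix.fromBlocks θ11 θ12 θ21 θ22 +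
        Matrix.fromBlocks (1 : Matrix (Fin (2 * p)) (Fin (2 * p)) ℝ) 0 0 0) *
      (Matrix.fromBlocks (1 : Matrix (Fin (2 * p)) (Fin (2 * p)) ℝ) 0 0 0 *
        Matrix.fromBlocks θ11 θ12 θ21 θ22 +
        Matrix.fromBlocks 0 0 0 (1 : Matrix (Fin q) (Fin q) ℝ))⁻¹ =
      Matrix.fromBlocks θ11⁻¹ (-(θ11⁻¹ * θ12)) (θ21 * θ11⁻¹) (θ22 - θ21 * θ11⁻¹ * θ12) := by
  have hCD : Matrix.fromBlocks (1 : Matrix (Fin (2 * p)) (Fin (2 * p)) ℝ) 0 0 0 *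
      Matrix.fromBlocks θ11 θ12 θ21 θ22 +
      Matrix.fromBlocks 0 0 0 (1 : Matrix (Fin q) (Fin q) ℝ) =
      Matrix.fromBlocks θ11 θ12 0 1 := by
    simp [Matrix.fromBlocks_multiply, Matrix.fromBlocks_add]
  have hAB : Matrix.fromBlocks 0 0 0 (1 : Matrix (Fin q) (Fin q) ℝ) *
      Matrix.fromBlocks θ11 θ12 θ21 θ22 +
      Matrix.fromBlocks (1 : Matrix (Fin (2 * p)) (Fin (2 * p)) ℝ) 0 0 0 =
      Matrix.fromBlocks 1 0 θ21 θ22 := by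
    simp [Matrix.fromBlocks_multiply, Matrix.fromBlocks_add]
  have hinv : (Matrix.fromBlocks θ11 θ12 0 (1 : Matrix (Fin q) (Fin q) ℝ))⁻¹ =
      Matrix.fromBlocks θ11⁻¹ (-(θ11⁻¹ * θ12)) 0 1 := by
    apply Matrix.inv_eq_right_inv
    rw [Matrix.fromBlocks_multiply]
    have key : θ11 * (θ11⁻¹ * θ12) = θ12 := by
      rw [← Matrix.mul_assoc, Matrix.mul_nonsing_inv _ h11, Matrix.one_mul]
    simp [key, Matrix.mul_nonsing_inv _ h11, ← Matrix.fromBlocks_one]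
  rw [hCD, hAB]
  constructor
  · rw [Matrix.isUnit_iff_isUnit_det, Matrix.det_fromBlocks_zero₂₁]
    simpa using h11
  · rw [hinv, Matrix.fromBlocks_multiply]
    congr 1 <;> simp [← Matrix.mul_assoc, sub_eq_neg_add]
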